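/- Let d ≥ 1, let ρ be a Hermitian positive semidefinite d×d complex matrix, and let O₁,…,O_n (n ≥ 1) be d×d complex matrices. Then the series Σ_{m≥0} (exp(−Tr ρ)/m!) · Tr(ρ^{⊗m} · λ_m(O₁) · λ_m(O₂) ⋯ λ_m(O_n)) converges absolutely, and its sum equals Σ_σ ∏_{A∈σ} Tr(ρ · ∏_{j∈A} O_j), where σ runs over all set partitions of {1,…,n} and for each block A the product ∏_{j∈A} O_j is taken in increasing order of the indices j. (This is the Poisson moment formula: the n-point correlation function of the Poisson-quantized operators λ(O_i) in the Poisson state φ_ω associated with the finite weight ω(x) = Tr(ρx).) -/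

import Mathlib

open scoped BigOperators ComplexOrder

namespace Stmt0
noncomputable section

/-- A set partition of `Fin n`: a finset of pairwise disjoint nonempty blocks whose union is
everything. -/
def IsSetPartition {n : ℕ} (σ : Finset (Finset (Fin n))) : Prop :=
  ∅ ∉ σ ∧ (∀ A ∈ σ, ∀ B ∈ σ, A ≠ B → Disjoint A B) ∧ σ.sup id = Finset.univ

instance {n : ℕ} (σ : Finset (Finset (Fin n))) : Decidable (IsSetPartition σ) :=
  inferInstanceAs (Decidable (∅ ∉ σ ∧ (∀ A ∈ σ, ∀ B ∈ σ, A ≠ B → Disjoint A B) ∧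
    σ.sup id = Finset.univ))

/-- `m`-fold Kronecker tensor power of a `d × d` matrix, realized on the index type
`Fin m → Fin d`. -/
def kronPow {d : ℕ} (ρ : Matrix (Fin d) (Fin d) ℂ) (m : ℕ) :
    Matrix (Fin m → Fin d) (Fin m → Fin d) ℂ :=
  Matrix.of fun f g => ∏ l : Fin m, ρ (f l) (g l)

/-- `O` placed in the `j`-th tensor slot, identity elsewhere. -/
def emb {d m : ℕ} (j : Fin m) (O : Matrix (Fin d) (Fin d) ℂ) :
    Matrix (Fin m → Fin d) (Fin m → Fin d) ℂ :=
  Matrix.of fun f g =>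
    O (f j) (g j) * ∏ l ∈ Finset.univ.erase j, (if f l = g l then (1 : ℂ) else 0)

/-- The `m`-th degree Poisson quantization map `λ_m(O) = Σ_{j<m} emb_j O`
(in particular `λ_0(O) = 0`). -/
def lamDeg {d : ℕ} (m : ℕ) (O : Matrix (Fin d) (Fin d) ℂ) :
    Matrix (Fin m → Fin d) (Fin m → Fin d) ℂ :=
  ∑ j : Fin m, emb j O

/-- Ordered product of the matrices `O j`, `j ∈ A`, in increasing order of the index `j`;
the empty product is the identity. -/
def orderedProd {n d : ℕ} (O : Fin n → Matrix (Fin d) (Fin d) ℂ) (A : Finset (Fin n)) :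
    Matrix (Fin d) (Fin d) ℂ :=
  ((A.sort (· ≤ ·)).map O).prod


/-! ### Auxiliary development -/

section Aux

/-- Expanding a product of sums (noncommutative, ordered). -/
lemma prod_ofFn_sum {R : Type*} [Semiring R] {m : ℕ} :
    ∀ {n : ℕ} (M : Fin n → Fin m → R),
    (List.ofFn fun i => ∑ j : Fin m, M i j).prod
      = ∑ f : Fin n → Fin m, (List.ofFn fun i => M i (f i)).prod := by
  intro n
  induction n with
  | zero => intro M; simp
  | succ n ih =>
    intro M
    rw [List.ofFn_succ, List.prod_cons, ih (fun i j => M i.succ j), Finset.mul_sum]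
    simp_rw [Finset.sum_mul]
    rw [Finset.sum_comm,
      ← (Fin.consEquiv (fun _ : Fin (n+1) => Fin m)).sum_comp
        (fun f => (List.ofFn fun i => M i (f i)).prod),
      Fintype.sum_prod_type]
    refine Finset.sum_congr rfl fun j _ => Finset.sum_congr rfl fun p _ => ?_
    rw [List.ofFn_succ, List.prod_cons]
    simp [Fin.consEquiv]

/-- Dropping the `1` factors from an ordered product. -/
lemma prod_map_ite {R ι : Type*} [Monoid R] (p : ι → Prop) [DecidablePred p]
    (A : ι → R) (l : List ι) :
    (l.map fun i => if p i then A i else 1).prod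
      = ((l.filter fun i => decide (p i)).map A).prod := by
  induction l with
  | nil => simp
  | cons a l ih =>
    by_cases h : p a <;> simp [List.filter_cons, h, ih]

lemma finRange_filter_eq_sort {n : ℕ} (p : Fin n → Prop) [DecidablePred p] :
    (Finset.univ.filter p).sort (· ≤ ·) = (List.finRange n).filter fun i => decide (p i) := by
  refine (fun hp hs => List.Perm.eq_of_pairwise' (Finset.pairwise_sort _ _) hs hp) ?_ ?_
  · refine (List.perm_ext_iff_of_nodup (Finset.sort_nodup _ _) ?_).mpr fun a => ?_
    · exact (List.nodup_finRange n).filter _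
    · simp [Finset.mem_sort, List.mem_filter]
  · exact List.Pairwise.filter _ ((List.pairwise_le_finRange n))

lemma prod_ofFn_ite {n d : ℕ} (O : Fin n → Matrix (Fin d) (Fin d) ℂ)
    (p : Fin n → Prop) [DecidablePred p] :
    (List.ofFn fun i => if p i then O i else 1).prod
      = ((((Finset.univ.filter p).sort (· ≤ ·)).map O)).prod := by
  rw [finRange_filter_eq_sort, List.ofFn_eq_map, prod_map_ite]

/-! #### Tensor products over slots -/

abbrev Mat (d : ℕ) := Matrix (Fin d) (Fin d) ℂ

def tens {d m : ℕ} (M : Fin m → Mat d) : Matrix (Fin m → Fin d) (Fin m → Fin d) ℂ :=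
  Matrix.of fun f g => ∏ s : Fin m, M s (f s) (g s)

lemma tens_mul {d m : ℕ} (M N : Fin m → Mat d) :
    tens M * tens N = tens (fun s => M s * N s) := by
  ext f g
  simp only [tens, Matrix.mul_apply, Matrix.of_apply]
  rw [Fintype.prod_sum (fun s (a : Fin d) => M s (f s) a * N s a (g s))]
  simp [Finset.prod_mul_distrib, Matrix.mul_apply]

lemma trace_tens {d m : ℕ} (M : Fin m → Mat d) :
    (tens M).trace = ∏ s : Fin m, (M s).trace := by
  simp only [Matrix.trace, Matrix.diag, tens, Matrix.of_apply]
  rw [Fintype.prod_sum (fun s (a : Fin d) => M s a a)]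

lemma tens_one {d m : ℕ} :
    tens (fun _ => (1 : Mat d)) = (1 : Matrix (Fin m → Fin d) (Fin m → Fin d) ℂ) := by
  ext f g
  simp only [tens, Matrix.of_apply, Matrix.one_apply]
  by_cases h : f = g
  · subst h; simp
  · rw [if_neg h]
    obtain ⟨s, hs⟩ : ∃ s, f s ≠ g s := by
      by_contra hc; push_neg at hc; exact h (funext hc)
    exact Finset.prod_eq_zero (Finset.mem_univ s) (by simp [hs])

lemma kronPow_eq {d m : ℕ} (ρ : Mat d) : kronPow ρ m = tens (fun _ => ρ) := rfl

lemma emb_eq {d m : ℕ} (j : Fin m) (O : Mat d) :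
    emb j O = tens (fun s => if s = j then O else 1) := by
  ext f g
  simp only [emb, tens, Matrix.of_apply]
  rw [← Finset.prod_erase_mul _ _ (Finset.mem_univ j)]
  rw [if_pos rfl, mul_comm]
  congr 1
  refine Finset.prod_congr rfl fun l hl => ?_
  rw [if_neg (Finset.mem_erase.mp hl).1, Matrix.one_apply]

lemma map_tens_prod {d m : ℕ} (L : List (Fin m → Mat d)) :
    (L.map tens).prod = tens (fun s => (L.map (fun M => M s)).prod) := by
  induction L with
  | nil => simp [tens_one]
  | cons a L ih => simp [ih, tens_mul]

lemma ofFn_tens_prod {d m k : ℕ} (g : Fin k → Fin m → Mat d) :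
    (List.ofFn fun i => tens (g i)).prod
      = tens (fun s => (List.ofFn fun i => g i s).prod) := by
  have h1 : (List.ofFn fun i => tens (g i)) = (List.ofFn g).map tens := by
    rw [List.map_ofFn]; rfl
  rw [h1, map_tens_prod]
  have h2 : ∀ s : Fin m, (List.ofFn g).map (fun M => M s) = List.ofFn (fun i => g i s) :=
    fun s => by rw [List.map_ofFn]; rfl
  simp only [h2]

/-! #### Fibers and fiber partitions -/

variable {n m : ℕ}

def fiber (f : Fin n → Fin m) (s : Fin m) : Finset (Fin n) :=
  Finset.univ.filter fun i => f i = s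

@[simp] lemma mem_fiber {f : Fin n → Fin m} {s : Fin m} {i : Fin n} :
    i ∈ fiber f s ↔ f i = s := by simp [fiber]

def fiberPartition (f : Fin n → Fin m) : Finset (Finset (Fin n)) :=
  Finset.univ.image fun i => fiber f (f i)

lemma fiber_eq_of_mem {f : Fin n → Fin m} {A : Finset (Fin n)}
    (hA : A ∈ fiberPartition f) {i : Fin n} (hi : i ∈ A) : A = fiber f (f i) := by
  obtain ⟨j, -, rfl⟩ := Finset.mem_image.mp hA
  have h : f i = f j := mem_fiber.mp hi
  rw [h]

lemma isSetPartition_fiberPartition (f : Fin n → Fin m) :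
    IsSetPartition (fiberPartition f) := by
  refine ⟨?_, ?_, ?_⟩
  · intro h
    obtain ⟨j, -, hj⟩ := Finset.mem_image.mp h
    exact absurd (hj ▸ mem_fiber.mpr rfl : j ∈ (∅ : Finset (Fin n))) (by simp)
  · intro A hA B hB hAB
    rw [Finset.disjoint_left]
    intro x hxA hxB
    exact hAB ((fiber_eq_of_mem hA hxA).trans (fiber_eq_of_mem hB hxB).symm)
  · refine Finset.eq_univ_iff_forall.mpr fun i => ?_
    refine Finset.mem_sup.mpr ⟨fiber f (f i), ?_, mem_fiber.mpr rfl⟩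
    exact Finset.mem_image.mpr ⟨i, Finset.mem_univ i, rfl⟩

lemma fiberPartition_eq_image (f : Fin n → Fin m) :
    fiberPartition f = (Finset.univ.image f).image (fiber f) := by
  rw [Finset.image_image]; rfl

lemma fiber_injOn (f : Fin n → Fin m) :
    Set.InjOn (fiber f) (Finset.univ.image f) := by
  intro s hs t ht hst
  obtain ⟨i, -, rfl⟩ := Finset.mem_image.mp hs
  have : i ∈ fiber f t := hst ▸ mem_fiber.mpr rfl
  exact mem_fiber.mp this

lemma card_fiberPartition (f : Fin n → Fin m) :
    (fiberPartition f).card = (Finset.univ.image f).card := by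
  rw [fiberPartition_eq_image, Finset.card_image_of_injOn (fiber_injOn f)]

lemma prod_fiber_split (f : Fin n → Fin m) (G : Finset (Fin n) → ℂ) :
    ∏ s : Fin m, G (fiber f s)
      = G ∅ ^ (m - (fiberPartition f).card) * ∏ A ∈ fiberPartition f, G A := by
  rw [← Finset.prod_mul_prod_compl (Finset.univ.image f) (fun s => G (fiber f s)), mul_comm]
  congr 1
  · have h0 : ∀ s ∈ (Finset.univ.image f)ᶜ, G (fiber f s) = G ∅ := by
      intro s hs
      have : fiber f s = ∅ := by
        rw [Finset.eq_empty_iff_forall_notMem]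
        intro i hi
        exact (Finset.mem_compl.mp hs)
          (Finset.mem_image.mpr ⟨i, Finset.mem_univ i, mem_fiber.mp hi⟩)
      rw [this]
    rw [Finset.prod_congr rfl h0, Finset.prod_const, Finset.card_compl, Fintype.card_fin,
      card_fiberPartition]
  · rw [fiberPartition_eq_image, Finset.prod_image (fiber_injOn f)]

/-! #### Blocks of a set partition -/

lemma existsUnique_block {σ : Finset (Finset (Fin n))} (hσ : IsSetPartition σ) (i : Fin n) :
    ∃! A, A ∈ σ ∧ i ∈ A := by
  obtain ⟨A, hA, hi⟩ := Finset.mem_sup.mp (by rw [hσ.2.2]; exact Finset.mem_univ i)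
  refine ⟨A, ⟨hA, hi⟩, fun B hB => ?_⟩
  by_contra hne
  exact Finset.disjoint_left.mp (hσ.2.1 B hB.1 A hA hne) hB.2 hi

def blockOf {σ : Finset (Finset (Fin n))} (hσ : IsSetPartition σ) (i : Fin n) :
    Finset (Fin n) :=
  σ.choose (fun A => i ∈ A) (existsUnique_block hσ i)

lemma blockOf_mem {σ : Finset (Finset (Fin n))} (hσ : IsSetPartition σ) (i : Fin n) :
    blockOf hσ i ∈ σ := (Finset.choose_spec (fun A => i ∈ A) σ (existsUnique_block hσ i)).1

lemma mem_blockOf {σ : Finset (Finset (Fin n))} (hσ : IsSetPartition σ) (i : Fin n) :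
    i ∈ blockOf hσ i := (Finset.choose_spec (fun A => i ∈ A) σ (existsUnique_block hσ i)).2

lemma blockOf_eq {σ : Finset (Finset (Fin n))} (hσ : IsSetPartition σ) {i : Fin n}
    {A : Finset (Fin n)} (hA : A ∈ σ) (hi : i ∈ A) : blockOf hσ i = A :=
  ((existsUnique_block hσ i).unique ⟨blockOf_mem hσ i, mem_blockOf hσ i⟩ ⟨hA, hi⟩)

lemma block_nonempty {σ : Finset (Finset (Fin n))} (hσ : IsSetPartition σ)
    {A : Finset (Fin n)} (hA : A ∈ σ) : A.Nonempty :=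
  Finset.nonempty_iff_ne_empty.mpr (fun h => hσ.1 (h ▸ hA))

/-! #### Counting functions with a given fiber partition -/

def partEquiv (σ : Finset (Finset (Fin n))) (hσ : IsSetPartition σ) :
    {f : Fin n → Fin m // fiberPartition f = σ} ≃ ({A // A ∈ σ} ↪ Fin m) where
  toFun := fun fh =>
    ⟨fun A => fh.1 (A.1.min' (block_nonempty hσ A.2)), by
      rintro ⟨A, hA⟩ ⟨B, hB⟩ hfe
      dsimp only at hfe
      have hA' : A ∈ fiberPartition fh.1 := by rw [fh.2]; exact hA
      have hB' : B ∈ fiberPartition fh.1 := by rw [fh.2]; exact hB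
      have e1 := fiber_eq_of_mem hA' (A.min'_mem (block_nonempty hσ hA))
      have e2 := fiber_eq_of_mem hB' (B.min'_mem (block_nonempty hσ hB))
      refine Subtype.ext (show A = B from ?_)
      rw [e1, hfe, ← e2]⟩
  invFun := fun e =>
    ⟨fun i => e ⟨blockOf hσ i, blockOf_mem hσ i⟩, by
      have claim : ∀ i, fiber (fun i => e ⟨blockOf hσ i, blockOf_mem hσ i⟩)
          (e ⟨blockOf hσ i, blockOf_mem hσ i⟩) = blockOf hσ i := by
        intro i
        ext j
        simp only [mem_fiber]
        constructor
        · intro hj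
          have : blockOf hσ j = blockOf hσ i := by
            have := e.injective hj
            exact congrArg Subtype.val this
          rw [← this]; exact mem_blockOf hσ j
        · intro hj
          have : (⟨blockOf hσ j, blockOf_mem hσ j⟩ : {A // A ∈ σ})
              = ⟨blockOf hσ i, blockOf_mem hσ i⟩ :=
            Subtype.ext (blockOf_eq hσ (blockOf_mem hσ i) hj)
          rw [this]
      rw [fiberPartition]
      ext A
      simp only [Finset.mem_image]
      constructor
      · rintro ⟨i, -, rfl⟩
        rw [claim i]; exact blockOf_mem hσ i
      · intro hA
        obtain ⟨i, hi⟩ := block_nonempty hσ hA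
        exact ⟨i, Finset.mem_univ i, by rw [claim i, blockOf_eq hσ hA hi]⟩⟩
  left_inv := by
    rintro ⟨f, hf⟩
    apply Subtype.ext
    funext i
    simp only
    have hmem : blockOf hσ i ∈ fiberPartition f := hf ▸ blockOf_mem hσ i
    have h1 := fiber_eq_of_mem hmem (mem_blockOf hσ i)
    have h2 : (blockOf hσ i).min' (block_nonempty hσ (blockOf_mem hσ i)) ∈ fiber f (f i) :=
      h1 ▸ Finset.min'_mem _ _
    exact mem_fiber.mp h2
  right_inv := by
    intro e
    ext ⟨A, hA⟩
    simp only [Function.Embedding.coeFn_mk]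
    have key : (⟨blockOf hσ (A.min' (block_nonempty hσ hA)),
        blockOf_mem hσ _⟩ : {A // A ∈ σ}) = ⟨A, hA⟩ :=
      Subtype.ext (blockOf_eq hσ hA (Finset.min'_mem _ _))
    exact congrArg (fun x => ((e x : Fin m) : ℕ)) key

lemma card_fiber_filter (σ : Finset (Finset (Fin n))) (hσ : IsSetPartition σ) :
    (Finset.univ.filter fun f : Fin n → Fin m => fiberPartition f = σ).card
      = m.descFactorial σ.card := by
  rw [← Fintype.card_subtype, Fintype.card_congr (partEquiv σ hσ),
    Fintype.card_embedding_eq, Fintype.card_fin, Fintype.card_coe]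

/-! #### Trace expansion -/

lemma orderedProd_fiber {d : ℕ} (O : Fin n → Mat d) (f : Fin n → Fin m) (s : Fin m) :
    (List.ofFn fun i => if s = f i then O i else 1).prod = orderedProd O (fiber f s) := by
  rw [prod_ofFn_ite O (fun i => s = f i), orderedProd]
  congr 2
  ext i
  simp [fiber, eq_comm]

lemma trace_expand {d : ℕ} (ρ : Mat d) (O : Fin n → Mat d) (m : ℕ) :
    (kronPow ρ m * (List.ofFn fun i => lamDeg m (O i)).prod).trace
      = ∑ f : Fin n → Fin m, ∏ s : Fin m, (ρ * orderedProd O (fiber f s)).trace := by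
  have hlam : (List.ofFn fun i => lamDeg m (O i))
      = List.ofFn fun i => ∑ j : Fin m, tens (fun s => if s = j then O i else 1) := by
    congr 1
    funext i
    rw [lamDeg]
    exact Finset.sum_congr rfl fun j _ => emb_eq j (O i)
  rw [hlam, prod_ofFn_sum (fun i j => tens (fun s => if s = j then O i else 1)),
    Finset.mul_sum, Matrix.trace_sum]
  refine Finset.sum_congr rfl fun f _ => ?_
  rw [ofFn_tens_prod, kronPow_eq, tens_mul, trace_tens]
  refine Finset.prod_congr rfl fun s _ => ?_
  rw [orderedProd_fiber O f s]

lemma sum_over_f {d : ℕ} (ρ : Mat d) (O : Fin n → Mat d) (m : ℕ) :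
    ∑ f : Fin n → Fin m, ∏ s : Fin m, (ρ * orderedProd O (fiber f s)).trace
      = ∑ σ ∈ Finset.univ.filter (IsSetPartition (n := n)),
          ((m.descFactorial σ.card : ℂ) * (ρ.trace ^ (m - σ.card)
            * ∏ A ∈ σ, (ρ * orderedProd O A).trace)) := by
  have hmaps : ∀ f : Fin n → Fin m, f ∈ (Finset.univ : Finset (Fin n → Fin m)) →
      fiberPartition f ∈ Finset.univ.filter (IsSetPartition (n := n)) := fun f _ =>
    Finset.mem_filter.mpr ⟨Finset.mem_univ _, isSetPartition_fiberPartition f⟩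
  rw [← Finset.sum_fiberwise_of_maps_to hmaps
    (fun f => ∏ s : Fin m, (ρ * orderedProd O (fiber f s)).trace)]
  refine Finset.sum_congr rfl fun σ hσm => ?_
  have hσ : IsSetPartition σ := (Finset.mem_filter.mp hσm).2
  have hconst : ∀ f ∈ Finset.univ.filter fun f : Fin n → Fin m => fiberPartition f = σ,
      ∏ s : Fin m, (ρ * orderedProd O (fiber f s)).trace
        = ρ.trace ^ (m - σ.card) * ∏ A ∈ σ, (ρ * orderedProd O A).trace := by
    intro f hf
    have hfσ : fiberPartition f = σ := (Finset.mem_filter.mp hf).2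
    rw [prod_fiber_split f (fun A => (ρ * orderedProd O A).trace), hfσ]
    congr 2
    rw [orderedProd]
    simp [Finset.sort_empty]
  rw [Finset.sum_congr rfl hconst, Finset.sum_const, card_fiber_filter σ hσ, nsmul_eq_mul]

/-! #### The analytic summation -/

lemma poisson_term_shift (t C : ℂ) (k m : ℕ) :
    Complex.exp (-t) / ((m + k).factorial : ℂ)
        * (((m + k).descFactorial k : ℂ) * (t ^ (m + k - k) * C))
      = Complex.exp (-t) * (t ^ m / (m.factorial : ℂ)) * C := by
  have hfac : ((m + k).factorial : ℂ)
      = ((m.factorial : ℂ)) * (((m + k).descFactorial k : ℂ)) := by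
    rw [← Nat.cast_mul]
    norm_cast
    rw [← Nat.factorial_mul_descFactorial (Nat.le_add_left k m), Nat.add_sub_cancel]
  have h1 : (((m + k).descFactorial k : ℂ)) ≠ 0 :=
    Nat.cast_ne_zero.mpr (Nat.descFactorial_eq_zero_iff_lt.not.mpr (by omega))
  have h2 : ((m.factorial : ℂ)) ≠ 0 := Nat.cast_ne_zero.mpr m.factorial_ne_zero
  rw [Nat.add_sub_cancel, hfac]
  field_simp

lemma hasSum_poisson_weight (t C : ℂ) (k : ℕ) :
    HasSum (fun m : ℕ => Complex.exp (-t) / (m.factorial : ℂ)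
        * ((m.descFactorial k : ℂ) * (t ^ (m - k) * C))) C := by
  have hmain : HasSum (fun m : ℕ => Complex.exp (-t) * (t ^ m / (m.factorial : ℂ)) * C) C := by
    have h := ((NormedSpace.expSeries_div_hasSum_exp (𝔸 := ℂ) t).mul_left
      (Complex.exp (-t))).mul_right C
    have hval : Complex.exp (-t) * NormedSpace.exp t * C = C := by
      rw [← Complex.exp_eq_exp_ℂ, ← Complex.exp_add, neg_add_cancel, Complex.exp_zero, one_mul]
    rwa [hval] at h
  have hshift : (fun m : ℕ => Complex.exp (-t) / (((m + k).factorial : ℂ))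
      * (((m + k).descFactorial k : ℂ) * (t ^ (m + k - k) * C)))
      = fun m : ℕ => Complex.exp (-t) * (t ^ m / (m.factorial : ℂ)) * C :=
    funext fun m => poisson_term_shift t C k m
  refine (hasSum_nat_add_iff' k).mp ?_
  have hzero : ∑ i ∈ Finset.range k, Complex.exp (-t) / ((i.factorial : ℂ))
      * ((i.descFactorial k : ℂ) * (t ^ (i - k) * C)) = 0 := by
    refine Finset.sum_eq_zero fun i hi => ?_
    have : i.descFactorial k = 0 :=
      Nat.descFactorial_eq_zero_iff_lt.mpr (Finset.mem_range.mp hi)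
    simp [this]
  rw [hzero, sub_zero, hshift]
  exact hmain

lemma summable_norm_poisson_weight (t C : ℂ) (k : ℕ) :
    Summable (fun m : ℕ => ‖Complex.exp (-t) / (m.factorial : ℂ)
        * ((m.descFactorial k : ℂ) * (t ^ (m - k) * C))‖) := by
  rw [← summable_nat_add_iff k]
  have hs := (Real.summable_pow_div_factorial ‖t‖).mul_left (‖Complex.exp (-t)‖ * ‖C‖)
  refine hs.congr fun m => ?_
  rw [poisson_term_shift t C k m]
  rw [norm_mul, norm_mul, norm_div, norm_pow, Complex.norm_natCast]
  ring

end Aux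

/-- **The Poisson moment formula.**  For a Hermitian positive semidefinite `ρ` and matrices
`O 0, …, O (n-1)`, the series `Σ_m (e^{-Tr ρ}/m!) Tr(ρ^{⊗m} λ_m(O 0) ⋯ λ_m(O (n-1)))`
converges absolutely, with sum `Σ_σ Π_{A ∈ σ} Tr(ρ · Π_{j ∈ A} O j)` over all set partitions
`σ` of `{0, …, n-1}`. -/
theorem poisson_moment_formula (d n : ℕ) (hd : 1 ≤ d) (hn : 1 ≤ n)
    (ρ : Matrix (Fin d) (Fin d) ℂ) (hρ : ρ.PosSemidef)
    (O : Fin n → Matrix (Fin d) (Fin d) ℂ) :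
    (Summable fun m : ℕ => ‖(Complex.exp (-ρ.trace) / (m.factorial : ℂ)) *
        (kronPow ρ m * (List.ofFn fun i => lamDeg m (O i)).prod).trace‖) ∧
    HasSum
      (fun m : ℕ => (Complex.exp (-ρ.trace) / (m.factorial : ℂ)) *
        (kronPow ρ m * (List.ofFn fun i => lamDeg m (O i)).prod).trace)
      (∑ σ ∈ Finset.univ.filter (IsSetPartition (n := n)),
        ∏ A ∈ σ, (ρ * orderedProd O A).trace) := by
  classical
  set t := ρ.trace with ht
  set P := Finset.univ.filter (IsSetPartition (n := n)) with hP
  set C : Finset (Finset (Fin n)) → ℂ := fun σ => ∏ A ∈ σ, (ρ * orderedProd O A).trace with hC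
  have hterm : ∀ m : ℕ, (Complex.exp (-t) / (m.factorial : ℂ)) *
      (kronPow ρ m * (List.ofFn fun i => lamDeg m (O i)).prod).trace
      = ∑ σ ∈ P, Complex.exp (-t) / (m.factorial : ℂ)
          * ((m.descFactorial σ.card : ℂ) * (t ^ (m - σ.card) * C σ)) := by
    intro m
    rw [trace_expand ρ O m, sum_over_f ρ O m, Finset.mul_sum]
  constructor
  · refine Summable.of_nonneg_of_le (fun m => norm_nonneg _) (fun m => ?_)
      (summable_sum (s := P) fun σ _ => summable_norm_poisson_weight t (C σ) σ.card)
    rw [hterm m]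
    exact norm_sum_le _ _
  · have hs := hasSum_sum (fun σ (_ : σ ∈ P) => hasSum_poisson_weight t (C σ) σ.card)
    have heq : (fun m : ℕ => (Complex.exp (-t) / (m.factorial : ℂ)) *
        (kronPow ρ m * (List.ofFn fun i => lamDeg m (O i)).prod).trace)
        = fun m : ℕ => ∑ σ ∈ P, Complex.exp (-t) / (m.factorial : ℂ)
          * ((m.descFactorial σ.card : ℂ) * (t ^ (m - σ.card) * C σ)) := funext hterm
    rw [heq]
    exact hs

end
end Stmt0
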